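/- arXiv:2207.14653 — 2 statements merged into one kernel-verified Lean document; each statement's English description precedes it below -/
import Mathlib

section
/- Let k : E × E → ℂ be a continuous Hermitian positive-semidefinite kernel on a compact metric space E equipped with a finite Borel measure ν. Then the integral operator L_k f (x) := ∫_E k(x,y) f(y) dν(y) is a bounded, self-adjoint, positive operator on L²(E, ν; ℂ). -/
open MeasureTheory Complex
open scoped ENNReal

private lemma exists_partition {E : Type*} [MetricSpace E] [CompactSpace E] [MeasurableSpace E]
    [BorelSpace E] (δ : ℝ) (hδ : 0 < δ) :
    ∃ (n : ℕ) (A : ℕ → Set E),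
      (∀ m, MeasurableSet (A m)) ∧ Pairwise (Function.onFun Disjoint A) ∧
      (⋃ i ∈ Finset.range n, A i) = Set.univ ∧
      (∀ m x y, x ∈ A m → y ∈ A m → dist x y < δ) := by
  obtain ⟨t, ht⟩ := isCompact_univ.elim_finite_subcover
    (fun x : E => Metric.ball x (δ/2)) (fun x => Metric.isOpen_ball)
    (fun x _ => Set.mem_iUnion.2 ⟨x, Metric.mem_ball_self (by positivity)⟩)
  set n := t.card with hn
  set e : Fin n → E := fun i => (t.equivFin.symm i : E) with he
  set B : ℕ → Set E := fun m => if h : m < n then Metric.ball (e ⟨m, h⟩) (δ/2) else ∅ with hB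
  have hBmeas : ∀ m, MeasurableSet (B m) := by
    intro m; rw [hB]; dsimp only; split
    · exact Metric.isOpen_ball.measurableSet
    · exact MeasurableSet.empty
  have hBunion : (⋃ m, B m) = Set.univ := by
    apply Set.eq_univ_of_univ_subset
    intro x _
    obtain ⟨y, hyt, hy⟩ := Set.mem_iUnion₂.1 (ht (Set.mem_univ x))
    refine Set.mem_iUnion.2 ⟨(t.equivFin ⟨y, hyt⟩ : Fin n), ?_⟩
    rw [hB]; dsimp only
    rw [dif_pos (t.equivFin ⟨y, hyt⟩).2]
    have : e ⟨(t.equivFin ⟨y, hyt⟩ : Fin n), (t.equivFin ⟨y, hyt⟩).2⟩ = y := by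
      rw [he]; simp
    rwa [this]
  refine ⟨n, disjointed B, fun m => MeasurableSet.disjointed hBmeas m,
    disjoint_disjointed B, ?_, ?_⟩
  · apply Set.eq_univ_of_univ_subset
    rw [← hBunion, ← iUnion_disjointed]
    intro x hx
    obtain ⟨m, hm⟩ := Set.mem_iUnion.1 hx
    have hmn : m < n := by
      by_contra h
      have hBe : B m = ∅ := by rw [hB]; dsimp only; rw [dif_neg h]
      exact ((hBe ▸ disjointed_subset B m) hm).elim
    exact Set.mem_biUnion (Finset.mem_range.2 hmn) hm
  · intro m x y hx hy
    by_cases h : m < n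
    · have hsub : disjointed B m ⊆ Metric.ball (e ⟨m, h⟩) (δ/2) := by
        refine (disjointed_subset B m).trans ?_
        rw [hB]; dsimp only; rw [dif_pos h]
      have h1 := Metric.mem_ball.1 (hsub hx)
      have h2 := Metric.mem_ball.1 (hsub hy)
      calc dist x y ≤ dist x (e ⟨m, h⟩) + dist (e ⟨m, h⟩) y := dist_triangle _ _ _
      _ < δ/2 + δ/2 := by rw [dist_comm (e ⟨m,h⟩) y]; exact add_lt_add h1 h2
      _ = δ := by ring
    · exfalso
      have : B m = ∅ := by rw [hB]; dsimp only; rw [dif_neg h]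
      exact (this ▸ (disjointed_subset B m)) hx


private lemma quad_nonneg {E : Type*} [MetricSpace E] [CompactSpace E] [MeasurableSpace E] [BorelSpace E]
    (ν : Measure E) [IsFiniteMeasure ν]
    (k : E → E → ℂ)
    (hcont : Continuous fun p : E × E => k p.1 p.2)
    (hpsd : ∀ (n : ℕ) (x : Fin n → E) (c : Fin n → ℂ),
      0 ≤ (∑ i, ∑ j, c i * starRingEnd ℂ (c j) * k (x j) (x i)).re ∧
      (∑ i, ∑ j, c i * starRingEnd ℂ (c j) * k (x j) (x i)).im = 0)
    (φ : E → ℂ) (hφ : Continuous φ) :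
    0 ≤ (∫ x, ∫ y, starRingEnd ℂ (φ x) * (k x y * φ y) ∂ν ∂ν).re := by
  classical
  rcases isEmpty_or_nonempty E with hE | hE
  · have : ν = 0 := by
      ext s hs
      simpa [Set.eq_empty_of_isEmpty s] using (measure_empty (μ := ν))
    simp [this]
  set g : E × E → ℂ := fun p => starRingEnd ℂ (φ p.1) * (k p.1 p.2 * φ p.2) with hg
  have hgc : Continuous g := ((continuous_conj.comp hφ).comp continuous_fst).mul
    (hcont.mul (hφ.comp continuous_snd))
  have hgint : Integrable g (ν.prod ν) :=
    hgc.integrable_of_hasCompactSupport (HasCompactSupport.of_compactSpace g)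
  have hrw : ∫ x, ∫ y, starRingEnd ℂ (φ x) * (k x y * φ y) ∂ν ∂ν = ∫ p, g p ∂(ν.prod ν) :=
    integral_integral hgint
  rw [hrw]
  refine le_of_forall_pos_le_add (fun ε hε => ?_)
  set M : ℝ := (ν Set.univ).toReal with hM
  have hM0 : 0 ≤ M := ENNReal.toReal_nonneg
  set ε' : ℝ := ε / (M ^ 2 + 1) with hε'
  have hε'0 : 0 < ε' := by positivity
  -- uniform continuity
  obtain ⟨δ, hδ0, hδ⟩ := Metric.uniformContinuous_iff.mp
    (CompactSpace.uniformContinuous_of_continuous hgc) ε' hε'0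
  obtain ⟨n, A, hAmeas, hAdisj, hAcover, hAsmall⟩ := exists_partition (E := E) δ hδ0
  set z : ℕ → E := fun m => if h : (A m).Nonempty then h.choose else Classical.arbitrary E with hz
  have hzmem : ∀ m, (A m).Nonempty → z m ∈ A m := by
    intro m hm; rw [hz]; dsimp only; rw [dif_pos hm]; exact hm.choose_spec
  set a : ℕ → ℝ := fun m => (ν (A m)).toReal with ha
  have ha0 : ∀ m, 0 ≤ a m := fun m => ENNReal.toReal_nonneg
  set S : ℂ := ∑ i ∈ Finset.range n, ∑ j ∈ Finset.range n,
    ((a i * a j : ℝ) : ℂ) * g (z i, z j) with hS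
  -- (1) decompose integral
  have hdecomp : ∫ p, g p ∂(ν.prod ν) =
      ∑ i ∈ Finset.range n, ∑ j ∈ Finset.range n, ∫ p in A i ×ˢ A j, g p ∂(ν.prod ν) := by
    have hcover2 : (⋃ q ∈ Finset.range n ×ˢ Finset.range n, A (Prod.fst q) ×ˢ A q.2)
        = (Set.univ : Set (E × E)) := by
      apply Set.eq_univ_of_univ_subset
      rintro ⟨x, y⟩ -
      have hx : x ∈ ⋃ i ∈ Finset.range n, A i := hAcover ▸ Set.mem_univ x
      have hy : y ∈ ⋃ i ∈ Finset.range n, A i := hAcover ▸ Set.mem_univ y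
      obtain ⟨i, hi, hxi⟩ := Set.mem_iUnion₂.1 hx
      obtain ⟨j, hj, hyj⟩ := Set.mem_iUnion₂.1 hy
      exact Set.mem_iUnion₂.2 ⟨(i, j), Finset.mem_product.2 ⟨hi, hj⟩, Set.mk_mem_prod hxi hyj⟩
    have hdisj : (↑(Finset.range n ×ˢ Finset.range n) : Set (ℕ × ℕ)).Pairwise
        (Function.onFun Disjoint fun q : ℕ × ℕ => A q.1 ×ˢ A q.2) := by
      intro q _ q' _ hne
      rw [Function.onFun, Set.disjoint_left]
      rintro ⟨x, y⟩ ⟨h1, h2⟩ ⟨h1', h2'⟩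
      rcases eq_or_ne q.1 q'.1 with h | h
      · have h2ne : q.2 ≠ q'.2 := fun hc => hne (Prod.ext h hc)
        exact Set.disjoint_left.1 (hAdisj h2ne) h2 h2'
      · exact Set.disjoint_left.1 (hAdisj h) h1 h1'
    calc ∫ p, g p ∂(ν.prod ν)
        = ∫ p in ⋃ q ∈ Finset.range n ×ˢ Finset.range n, A q.1 ×ˢ A q.2, g p ∂(ν.prod ν) := by
          rw [hcover2, setIntegral_univ]
      _ = ∑ q ∈ Finset.range n ×ˢ Finset.range n, ∫ p in A q.1 ×ˢ A q.2, g p ∂(ν.prod ν) :=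
          integral_biUnion_finset _ (fun q _ => (hAmeas q.1).prod (hAmeas q.2)) hdisj
            (fun q _ => hgint.integrableOn)
      _ = _ := Finset.sum_product _ _ _
  -- (2) the Riemann sum is psd
  have h1 : ∀ F : ℕ → ℕ → ℂ, (∑ i : Fin n, ∑ j : Fin n, F i j)
      = ∑ i ∈ Finset.range n, ∑ j ∈ Finset.range n, F i j := by
    intro F
    rw [Fin.sum_univ_eq_sum_range (fun i => ∑ j : Fin n, F i j) n]
    exact Finset.sum_congr rfl fun i _ => Fin.sum_univ_eq_sum_range (fun j => F i j) n
  have hSpos : 0 ≤ S.re := by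
    have := (hpsd n (fun i : Fin n => z i) (fun i : Fin n => ((a i : ℂ) * φ (z i)))).1
    have hsum : (∑ i : Fin n, ∑ j : Fin n,
        ((a (i : ℕ) : ℂ) * φ (z i)) * starRingEnd ℂ ((a (j : ℕ) : ℂ) * φ (z j)) * k (z j) (z i)) = S := by
      rw [h1 (fun i j => ((a i : ℂ) * φ (z i)) * starRingEnd ℂ ((a j : ℂ) * φ (z j)) * k (z j) (z i)),
        hS, Finset.sum_comm]
      refine Finset.sum_congr rfl fun j _ => Finset.sum_congr rfl fun i _ => ?_
      simp only [hg, map_mul, Complex.conj_ofReal]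
      push_cast
      ring
    rwa [hsum] at this
  -- (3) error bounds
  have herr : ∀ i ∈ Finset.range n, ∀ j ∈ Finset.range n,
      ‖(∫ p in A i ×ˢ A j, g p ∂(ν.prod ν)) - ((a i * a j : ℝ) : ℂ) * g (z i, z j)‖
        ≤ ε' * (a i * a j) := by
    intro i _ j _
    have hfin : (ν.prod ν) (A i ×ˢ A j) < ⊤ := measure_lt_top _ _
    have hmeas : MeasurableSet (A i ×ˢ A j) := (hAmeas i).prod (hAmeas j)
    have hconst : ((a i * a j : ℝ) : ℂ) * g (z i, z j)
        = ∫ _p in A i ×ˢ A j, g (z i, z j) ∂(ν.prod ν) := by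
      rw [setIntegral_const, measureReal_def, Measure.prod_prod, ENNReal.toReal_mul, Complex.real_smul]
    rw [hconst, ← integral_sub hgint.integrableOn (integrableOn_const hfin.ne)]
    have hbound : ∀ p ∈ A i ×ˢ A j, ‖g p - g (z i, z j)‖ ≤ ε' := by
      rintro ⟨x, y⟩ ⟨hx, hy⟩
      have hzi := hzmem i ⟨x, hx⟩
      have hzj := hzmem j ⟨y, hy⟩
      have hd : dist (x, y) (z i, z j) < δ := by
        rw [Prod.dist_eq]
        exact max_lt (hAsmall i x (z i) hx hzi) (hAsmall j y (z j) hy hzj)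
      have := hδ hd
      rw [dist_eq_norm] at this
      exact this.le
    calc ‖∫ p in A i ×ˢ A j, (g p - g (z i, z j)) ∂(ν.prod ν)‖
        ≤ ε' * ((ν.prod ν) (A i ×ˢ A j)).toReal :=
          norm_setIntegral_le_of_norm_le_const hfin hbound
      _ = ε' * (a i * a j) := by rw [Measure.prod_prod, ENNReal.toReal_mul]
  -- (4) sum of a over range n equals M
  have hasum : ∑ i ∈ Finset.range n, a i = M := by
    rw [hM, ← hAcover, measure_biUnion_finset
      (fun q _ q' _ h => hAdisj h) (fun i _ => hAmeas i),
      ENNReal.toReal_sum (fun i _ => measure_ne_top ν (A i))]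
  -- (5) combine
  have hdiff : ‖(∫ p, g p ∂(ν.prod ν)) - S‖ ≤ ε' * M ^ 2 := by
    rw [hdecomp, hS, ← Finset.sum_sub_distrib]
    calc ‖∑ i ∈ Finset.range n, (∑ j ∈ Finset.range n, (∫ p in A i ×ˢ A j, g p ∂(ν.prod ν))
            - ∑ j ∈ Finset.range n, ((a i * a j : ℝ) : ℂ) * g (z i, z j))‖
        ≤ ∑ i ∈ Finset.range n, ‖∑ j ∈ Finset.range n, (∫ p in A i ×ˢ A j, g p ∂(ν.prod ν))
            - ∑ j ∈ Finset.range n, ((a i * a j : ℝ) : ℂ) * g (z i, z j)‖ :=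
          norm_sum_le _ _
      _ ≤ ∑ i ∈ Finset.range n, ∑ j ∈ Finset.range n,
            ‖(∫ p in A i ×ˢ A j, g p ∂(ν.prod ν)) - ((a i * a j : ℝ) : ℂ) * g (z i, z j)‖ := by
          refine Finset.sum_le_sum (fun i hi => ?_)
          rw [← Finset.sum_sub_distrib]
          exact norm_sum_le _ _
      _ ≤ ∑ i ∈ Finset.range n, ∑ j ∈ Finset.range n, ε' * (a i * a j) := by
          refine Finset.sum_le_sum (fun i hi => Finset.sum_le_sum (fun j hj => herr i hi j hj))
      _ = ε' * M ^ 2 := by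
          simp_rw [← Finset.mul_sum, ← Finset.sum_mul]
          rw [hasum]; ring
  have hre : -(ε' * M ^ 2) ≤ (∫ p, g p ∂(ν.prod ν)).re := by
    have h1 : ((∫ p, g p ∂(ν.prod ν)) - S).re ≥ -(ε' * M ^ 2) := by
      have := (Complex.abs_re_le_norm ((∫ p, g p ∂(ν.prod ν)) - S))
      have h2 := abs_le.1 (this.trans hdiff)
      linarith [h2.1]
    have : (∫ p, g p ∂(ν.prod ν)).re = ((∫ p, g p ∂(ν.prod ν)) - S).re + S.re := by
      simp [Complex.sub_re]
    linarith
  have hfinal : ε' * M ^ 2 ≤ ε := by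
    rw [hε']
    rw [div_mul_eq_mul_div, div_le_iff₀ (by positivity)]
    nlinarith [hε.le, sq_nonneg M]
  linarith

/-- For a continuous Hermitian positive-semidefinite kernel `k` on a compact
metric space `E` with a finite Borel measure `ν`, the integral operator
`L_k f (x) = ∫ k(x,y) f(y) dν(y)` is a bounded, self-adjoint, positive operator on
`L²(E,ν;ℂ)`. -/
theorem integral_kernel_operator_selfadjoint_positive
    {E : Type*} [MetricSpace E] [CompactSpace E] [MeasurableSpace E] [BorelSpace E]
    (ν : Measure E) [IsFiniteMeasure ν]
    (k : E → E → ℂ)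
    (hcont : Continuous fun p : E × E => k p.1 p.2)
    (hherm : ∀ x y : E, k x y = starRingEnd ℂ (k y x))
    (hpsd : ∀ (n : ℕ) (x : Fin n → E) (c : Fin n → ℂ),
      0 ≤ (∑ i, ∑ j, c i * starRingEnd ℂ (c j) * k (x j) (x i)).re ∧
      (∑ i, ∑ j, c i * starRingEnd ℂ (c j) * k (x j) (x i)).im = 0) :
    ∃ L : Lp ℂ 2 ν →L[ℂ] Lp ℂ 2 ν,
      (∀ f : Lp ℂ 2 ν, (L f : E → ℂ) =ᵐ[ν] fun x => ∫ y, k x y * f y ∂ν) ∧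
      (∀ f g : Lp ℂ 2 ν, (inner ℂ (L f) g : ℂ) = (inner ℂ f (L g) : ℂ)) ∧
      (∀ f : Lp ℂ 2 ν, 0 ≤ (inner ℂ (L f) f : ℂ).re ∧ (inner ℂ (L f) f : ℂ).im = 0) := by
  -- a uniform bound for the kernel
  obtain ⟨C, hC0, hC⟩ : ∃ C : ℝ, 0 ≤ C ∧ ∀ x y, ‖k x y‖ ≤ C := by
    rcases isEmpty_or_nonempty E with h | h
    · exact ⟨0, le_refl _, fun x => (IsEmpty.false x).elim⟩
    · obtain ⟨p, -, hp⟩ := isCompact_univ.exists_isMaxOn Set.univ_nonempty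
        (hcont.norm.continuousOn (s := Set.univ))
      exact ⟨‖k p.1 p.2‖, norm_nonneg _, fun x y => hp (Set.mem_univ (x, y))⟩
  have hkm : ∀ x : E, AEStronglyMeasurable (fun y => k x y) ν :=
    fun x => (hcont.comp (Continuous.prodMk_right x)).aestronglyMeasurable
  have hker : ∀ (x : E) {f : E → ℂ}, Integrable f ν → Integrable (fun y => k x y * f y) ν :=
    fun x f hf => hf.bdd_mul (hkm x) (Filter.Eventually.of_forall fun y => hC x y)
  have hint : ∀ f : Lp ℂ 2 ν, Integrable (f : E → ℂ) ν :=
    fun f => (Lp.memLp f).integrable one_le_two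
  have hTcont : ∀ {f : E → ℂ}, Integrable f ν → Continuous fun x => ∫ y, k x y * f y ∂ν := by
    intro f hf
    refine continuous_of_dominated (bound := fun y => C * ‖f y‖) ?_ ?_ ?_ ?_
    · intro x; exact (hkm x).mul hf.1
    · intro x
      filter_upwards with y
      calc ‖k x y * f y‖ = ‖k x y‖ * ‖f y‖ := norm_mul _ _
      _ ≤ C * ‖f y‖ := mul_le_mul_of_nonneg_right (hC x y) (norm_nonneg _)
    · exact hf.norm.const_mul C
    · filter_upwards with y
      exact (hcont.comp (continuous_id.prodMk continuous_const)).mul continuous_const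
  have hTbdd : ∀ {f : E → ℂ}, Integrable f ν → ∀ x,
      ‖∫ y, k x y * f y ∂ν‖ ≤ C * ∫ y, ‖f y‖ ∂ν := by
    intro f hf x
    calc ‖∫ y, k x y * f y ∂ν‖ ≤ ∫ y, ‖k x y * f y‖ ∂ν := norm_integral_le_integral_norm _
    _ ≤ ∫ y, C * ‖f y‖ ∂ν := by
        refine integral_mono_of_nonneg ?_ (hf.norm.const_mul C) ?_
        · filter_upwards with y; positivity
        · filter_upwards with y
          rw [norm_mul]
          exact mul_le_mul_of_nonneg_right (hC x y) (norm_nonneg _)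
    _ = C * ∫ y, ‖f y‖ ∂ν := integral_const_mul C _
  have hTmem : ∀ f : Lp ℂ 2 ν, MemLp (fun x => ∫ y, k x y * f y ∂ν) 2 ν := by
    intro f
    exact MemLp.of_bound (hTcont (hint f)).aestronglyMeasurable _
      (Filter.Eventually.of_forall (hTbdd (hint f)))
  set c2 : ℝ := ((ν Set.univ) ^ (2:ℝ)⁻¹).toReal with hc2
  have hc20 : 0 ≤ c2 := ENNReal.toReal_nonneg
  have hL1L2 : ∀ f : Lp ℂ 2 ν, ∫ y, ‖f y‖ ∂ν ≤ c2 * ‖f‖ := by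
    intro f
    have hmem : MemLp (f : E → ℂ) 2 ν := Lp.memLp f
    have h1 : ∫ y, ‖f y‖ ∂ν = (eLpNorm (f : E → ℂ) 1 ν).toReal := by
      rw [eLpNorm_one_eq_lintegral_enorm, integral_norm_eq_lintegral_enorm (hint f).1]
    have h2 : eLpNorm (f : E → ℂ) 1 ν
        ≤ eLpNorm (f : E → ℂ) 2 ν * (ν Set.univ) ^ ((1:ℝ)/1 - 1/2) :=
      eLpNorm_le_eLpNorm_mul_rpow_measure_univ (by norm_num) hmem.1
    have hfin : eLpNorm (f : E → ℂ) 2 ν ≠ ⊤ := hmem.2.ne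
    have h3 : ((1:ℝ)/1 - 1/2) = (2:ℝ)⁻¹ := by norm_num
    rw [h1, Lp.norm_def]
    calc (eLpNorm (f : E → ℂ) 1 ν).toReal
        ≤ (eLpNorm (f : E → ℂ) 2 ν * (ν Set.univ) ^ ((1:ℝ)/1 - 1/2)).toReal :=
          ENNReal.toReal_mono (ENNReal.mul_ne_top hfin
            (ENNReal.rpow_ne_top_of_nonneg (by norm_num) (measure_ne_top _ _))) h2
      _ = c2 * (eLpNorm (f : E → ℂ) 2 ν).toReal := by
          rw [ENNReal.toReal_mul, mul_comm, h3]
  -- the operator as a linear map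
  set Tlin : Lp ℂ 2 ν →ₗ[ℂ] Lp ℂ 2 ν :=
    { toFun := fun f => (hTmem f).toLp _
      map_add' := by
        intro f g
        have hfg : (fun x => ∫ y, k x y * (↑(f + g) : E → ℂ) y ∂ν) =ᵐ[ν]
            ((fun x => ∫ y, k x y * f y ∂ν) + fun x => ∫ y, k x y * g y ∂ν) := by
          refine Filter.Eventually.of_forall (fun x => ?_)
          show ∫ y, k x y * (↑(f + g) : E → ℂ) y ∂ν
            = (∫ y, k x y * f y ∂ν) + ∫ y, k x y * g y ∂ν
          have h1 : ∫ y, k x y * (↑(f + g) : E → ℂ) y ∂ν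
              = ∫ y, (k x y * f y + k x y * g y) ∂ν := by
            refine integral_congr_ae ?_
            filter_upwards [Lp.coeFn_add f g] with y hy
            rw [hy, Pi.add_apply]; ring
          rw [h1, integral_add (hker x (hint f)) (hker x (hint g))]
        rw [MemLp.toLp_congr (hTmem (f + g)) ((hTmem f).add (hTmem g)) hfg,
          MemLp.toLp_add]
      map_smul' := by
        intro c f
        have hcs : (fun x => ∫ y, k x y * (↑(c • f) : E → ℂ) y ∂ν) =ᵐ[ν]
            (c • fun x => ∫ y, k x y * f y ∂ν) := by
          refine Filter.Eventually.of_forall (fun x => ?_)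
          show ∫ y, k x y * (↑(c • f) : E → ℂ) y ∂ν = c • ∫ y, k x y * f y ∂ν
          have h1 : ∫ y, k x y * (↑(c • f) : E → ℂ) y ∂ν = ∫ y, c * (k x y * f y) ∂ν := by
            refine integral_congr_ae ?_
            filter_upwards [Lp.coeFn_smul c f] with y hy
            rw [hy, Pi.smul_apply, smul_eq_mul]; ring
          rw [h1, integral_const_mul, smul_eq_mul]
        rw [RingHom.id_apply,
          MemLp.toLp_congr (hTmem (c • f)) ((hTmem f).const_smul c) hcs,
          MemLp.toLp_const_smul] } with hTlin
  have hTnorm : ∀ f : Lp ℂ 2 ν,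
      ‖Tlin f‖ ≤ (measureUnivNNReal ν ^ (2:ℝ≥0∞).toReal⁻¹ * (C * c2)) * ‖f‖ := by
    intro f
    have hcoe : (Tlin f : E → ℂ) =ᵐ[ν] fun x => ∫ y, k x y * f y ∂ν := (hTmem f).coeFn_toLp
    have := Lp.norm_le_of_ae_bound (f := Tlin f) (C := C * c2 * ‖f‖)
      (by positivity) ?_
    · calc ‖Tlin f‖ ≤ measureUnivNNReal ν ^ (2:ℝ≥0∞).toReal⁻¹ * (C * c2 * ‖f‖) := this
      _ = (measureUnivNNReal ν ^ (2:ℝ≥0∞).toReal⁻¹ * (C * c2)) * ‖f‖ := by ring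
    · filter_upwards [hcoe] with x hx
      rw [hx]
      calc ‖∫ y, k x y * f y ∂ν‖ ≤ C * ∫ y, ‖f y‖ ∂ν := hTbdd (hint f) x
      _ ≤ C * (c2 * ‖f‖) := mul_le_mul_of_nonneg_left (hL1L2 f) hC0
      _ = C * c2 * ‖f‖ := by ring
  set L : Lp ℂ 2 ν →L[ℂ] Lp ℂ 2 ν := Tlin.mkContinuous _ hTnorm with hLdef
  have hL : ∀ f : Lp ℂ 2 ν, (L f : E → ℂ) =ᵐ[ν] fun x => ∫ y, k x y * f y ∂ν :=
    fun f => (hTmem f).coeFn_toLp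
  -- the basic double-integral formula for the inner product
  have hinner : ∀ f g : Lp ℂ 2 ν, (inner ℂ f (L g) : ℂ)
      = ∫ x, ∫ y, starRingEnd ℂ ((f : E → ℂ) x) * (k x y * (g : E → ℂ) y) ∂ν ∂ν := by
    intro f g
    rw [L2.inner_def]
    calc ∫ x, (inner ℂ ((f : E → ℂ) x) ((L g : E → ℂ) x) : ℂ) ∂ν
        = ∫ x, starRingEnd ℂ ((f : E → ℂ) x) * ∫ y, k x y * (g : E → ℂ) y ∂ν ∂ν := by
          refine integral_congr_ae ?_
          filter_upwards [hL g] with x hx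
          rw [RCLike.inner_apply', hx]
      _ = ∫ x, ∫ y, starRingEnd ℂ ((f : E → ℂ) x) * (k x y * (g : E → ℂ) y) ∂ν ∂ν := by
          refine integral_congr_ae (Filter.Eventually.of_forall fun x => ?_)
          dsimp only
          rw [integral_const_mul]
  have hprodint : ∀ f g : Lp ℂ 2 ν, Integrable
      (Function.uncurry fun x y =>
        starRingEnd ℂ ((f : E → ℂ) x) * (k x y * (g : E → ℂ) y)) (ν.prod ν) := by
    intro f g
    have hfc : Integrable (fun x => starRingEnd ℂ ((f : E → ℂ) x)) ν := by
      refine (hint f).norm.mono' (continuous_conj.comp_aestronglyMeasurable (hint f).1) ?_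
      filter_upwards with x
      rw [RCLike.norm_conj]
    have hm : AEStronglyMeasurable
        (Function.uncurry fun x y =>
          starRingEnd ℂ ((f : E → ℂ) x) * (k x y * (g : E → ℂ) y)) (ν.prod ν) := by
      have h1 : AEStronglyMeasurable (fun p : E × E => starRingEnd ℂ ((f : E → ℂ) p.1))
          (ν.prod ν) :=
        hfc.1.comp_quasiMeasurePreserving Measure.quasiMeasurePreserving_fst
      have h2 : AEStronglyMeasurable (fun p : E × E => (g : E → ℂ) p.2) (ν.prod ν) :=
        (hint g).1.comp_quasiMeasurePreserving Measure.quasiMeasurePreserving_snd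
      exact h1.mul (hcont.aestronglyMeasurable.mul h2)
    have hb : Integrable (fun p : E × E => (C * ‖(f : E → ℂ) p.1‖) * ‖(g : E → ℂ) p.2‖)
        (ν.prod ν) := ((hint f).norm.const_mul C).mul_prod (hint g).norm
    refine hb.mono' hm ?_
    filter_upwards with p
    rw [Function.uncurry]
    calc ‖starRingEnd ℂ ((f : E → ℂ) p.1) * (k p.1 p.2 * (g : E → ℂ) p.2)‖
        = ‖(f : E → ℂ) p.1‖ * (‖k p.1 p.2‖ * ‖(g : E → ℂ) p.2‖) := by
          rw [norm_mul, norm_mul, RCLike.norm_conj]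
      _ ≤ ‖(f : E → ℂ) p.1‖ * (C * ‖(g : E → ℂ) p.2‖) := by
          refine mul_le_mul_of_nonneg_left ?_ (norm_nonneg _)
          exact mul_le_mul_of_nonneg_right (hC _ _) (norm_nonneg _)
      _ = (C * ‖(f : E → ℂ) p.1‖) * ‖(g : E → ℂ) p.2‖ := by ring
  -- self-adjointness
  have hsym : ∀ f g : Lp ℂ 2 ν, (inner ℂ f (L g) : ℂ) = (inner ℂ (L f) g : ℂ) := by
    intro f g
    rw [hinner f g, L2.inner_def]
    calc ∫ x, ∫ y, starRingEnd ℂ ((f : E → ℂ) x) * (k x y * (g : E → ℂ) y) ∂ν ∂ν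
        = ∫ y, ∫ x, starRingEnd ℂ ((f : E → ℂ) x) * (k x y * (g : E → ℂ) y) ∂ν ∂ν :=
          integral_integral_swap (hprodint f g)
      _ = ∫ y, starRingEnd ℂ (∫ x, k y x * (f : E → ℂ) x ∂ν) * (g : E → ℂ) y ∂ν := by
          refine integral_congr_ae (Filter.Eventually.of_forall fun y => ?_)
          dsimp only
          rw [← integral_conj, ← integral_mul_const]
          refine integral_congr_ae (Filter.Eventually.of_forall fun x => ?_)
          dsimp only
          rw [map_mul, ← hherm x y]
          ring
      _ = ∫ y, (inner ℂ ((L f : E → ℂ) y) ((g : E → ℂ) y) : ℂ) ∂ν := by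
          refine integral_congr_ae ?_
          filter_upwards [hL f] with y hy
          rw [RCLike.inner_apply', hy]
  -- positivity on continuous functions, extended by density
  have hposq : ∀ f : Lp ℂ 2 ν, 0 ≤ (inner ℂ f (L f) : ℂ).re := by
    have hclosed : IsClosed {f : Lp ℂ 2 ν | 0 ≤ (inner ℂ f (L f) : ℂ).re} := by
      have hc : Continuous fun f : Lp ℂ 2 ν => (inner ℂ f (L f) : ℂ).re :=
        Complex.continuous_re.comp (continuous_id.inner L.continuous)
      exact isClosed_le continuous_const hc
    have hdense : DenseRange (ContinuousMap.toLp (E := ℂ) 2 ν ℂ) :=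
      ContinuousMap.toLp_denseRange (E := ℂ) (μ := ν) ℂ (by norm_num)
    intro f
    refine hdense.induction_on f hclosed (fun φ => ?_)
    have hcoe := ContinuousMap.coeFn_toLp (α := E) (E := ℂ) (p := 2) (μ := ν) (𝕜 := ℂ) φ
    show 0 ≤ (inner ℂ (ContinuousMap.toLp (E := ℂ) 2 ν ℂ φ)
      (L (ContinuousMap.toLp (E := ℂ) 2 ν ℂ φ)) : ℂ).re
    rw [hinner]
    have heq : ∫ x, ∫ y, starRingEnd ℂ (((ContinuousMap.toLp (E := ℂ) 2 ν ℂ φ) : E → ℂ) x)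
          * (k x y * (((ContinuousMap.toLp (E := ℂ) 2 ν ℂ φ) : E → ℂ)) y) ∂ν ∂ν
        = ∫ x, ∫ y, starRingEnd ℂ (φ x) * (k x y * φ y) ∂ν ∂ν := by
      refine integral_congr_ae ?_
      filter_upwards [hcoe] with x hx
      rw [hx]
      refine integral_congr_ae ?_
      filter_upwards [hcoe] with y hy
      rw [hy]
    rw [heq]
    exact quad_nonneg ν k hcont hpsd φ φ.continuous
  refine ⟨L, hL, fun f g => (hsym f g).symm, fun f => ?_⟩
  have hreal : (inner ℂ f (L f) : ℂ) = starRingEnd ℂ (inner ℂ f (L f) : ℂ) :=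
    (hsym f f).trans (inner_conj_symm (L f) f).symm
  constructor
  · rw [← hsym f f]
    exact hposq f
  · rw [← hsym f f]
    exact (Complex.conj_eq_iff_im.1 hreal.symm)
end

section
/- Let k : E × E → ℂ be a continuous kernel on a compact metric space E with finite Borel measure ν. Then the integral operator L_k on L²(E, ν; ℂ) defined by L_k f(x) = ∫ k(x,y) f(y) dν(y) is a compact operator. -/
open MeasureTheory BoundedContinuousFunction
set_option linter.unusedSectionVars false
set_option maxHeartbeats 1000000

section Aux

variable {E : Type*} [MetricSpace E] [CompactSpace E] [MeasurableSpace E] [BorelSpace E]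
  {ν : Measure E} [IsFiniteMeasure ν]

private lemma aux_integrable (f : Lp ℂ 2 ν) : Integrable (f : E → ℂ) ν :=
  memLp_one_iff_integrable.mp ((Lp.memLp f).mono_exponent one_le_two)

/-- L¹ norm controlled by L² norm on a finite measure space. -/
private lemma aux_l1_bound (f : Lp ℂ 2 ν) :
    ∫ y, ‖f y‖ ∂ν ≤ ((ν Set.univ) ^ (2⁻¹ : ℝ)).toReal * ‖f‖ := by
  have h1 : eLpNorm (f : E → ℂ) 1 ν ≤ eLpNorm (f : E → ℂ) 2 ν * (ν Set.univ) ^ (2⁻¹ : ℝ) := by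
    have := eLpNorm_le_eLpNorm_mul_rpow_measure_univ (p := 1) (q := 2) one_le_two
      (Lp.aestronglyMeasurable f)
    simpa using this.trans_eq (by norm_num)
  have heq : ∫ y, ‖f y‖ ∂ν = (eLpNorm (f : E → ℂ) 1 ν).toReal := by
    rw [eLpNorm_one_eq_lintegral_enorm,
      integral_norm_eq_lintegral_enorm (Lp.aestronglyMeasurable f)]
  have hfin : eLpNorm (f : E → ℂ) 2 ν * (ν Set.univ) ^ (2⁻¹ : ℝ) ≠ ⊤ :=
    ENNReal.mul_ne_top (Lp.eLpNorm_ne_top f)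
      (ENNReal.rpow_ne_top_of_nonneg (by norm_num) (measure_ne_top ν _))
  calc ∫ y, ‖f y‖ ∂ν = (eLpNorm (f : E → ℂ) 1 ν).toReal := heq
    _ ≤ (eLpNorm (f : E → ℂ) 2 ν * (ν Set.univ) ^ (2⁻¹ : ℝ)).toReal :=
        ENNReal.toReal_mono hfin h1
    _ = ((ν Set.univ) ^ (2⁻¹ : ℝ)).toReal * ‖f‖ := by
        rw [ENNReal.toReal_mul, Lp.norm_def, mul_comm]

end Aux

/-- For a continuous kernel `k` on a compact metric space `E` with finite Borel
measure `ν`, the integral operator `L_k f (x) = ∫ k(x,y) f(y) dν(y)` is a compact operator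
on `L²(E,ν;ℂ)`. -/
theorem integral_kernel_operator_compact
    {E : Type*} [MetricSpace E] [CompactSpace E] [MeasurableSpace E] [BorelSpace E]
    (ν : Measure E) [IsFiniteMeasure ν]
    (k : E → E → ℂ)
    (hcont : Continuous fun p : E × E => k p.1 p.2) :
    ∃ L : Lp ℂ 2 ν →L[ℂ] Lp ℂ 2 ν,
      (∀ f : Lp ℂ 2 ν, (L f : E → ℂ) =ᵐ[ν] fun x => ∫ y, k x y * f y ∂ν) ∧
      IsCompactOperator L := by
  classical
  -- a bound on the kernel
  obtain ⟨M₀, hM₀⟩ : ∃ C, ∀ p ∈ (Set.univ : Set (E × E)), ‖k p.1 p.2‖ ≤ C :=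
    isCompact_univ.exists_bound_of_continuousOn hcont.continuousOn
  set M : ℝ := max M₀ 0 with hMdef
  have hM : ∀ x y : E, ‖k x y‖ ≤ M := fun x y =>
    le_trans (hM₀ (x, y) (Set.mem_univ _)) (le_max_left _ _)
  have hM0 : 0 ≤ M := le_max_right _ _
  set C₂ : ℝ := ((ν Set.univ) ^ (2⁻¹ : ℝ)).toReal with hC₂def
  have hC₂0 : 0 ≤ C₂ := ENNReal.toReal_nonneg
  -- continuity of `y ↦ k x y`
  have hky : ∀ x : E, Continuous fun y => k x y := fun x =>
    hcont.comp (Continuous.prodMk_right x)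
  have hkx : ∀ y : E, Continuous fun x => k x y := fun y =>
    hcont.comp (continuous_id.prodMk continuous_const)
  -- integrability of the integrand
  have hint : ∀ (f : Lp ℂ 2 ν) (x : E), Integrable (fun y => k x y * f y) ν := fun f x =>
    (aux_integrable f).bdd_mul (hky x).aestronglyMeasurable (ae_of_all _ (fun y => hM x y))
  -- the integral transform, as a continuous function
  have hcont_g : ∀ f : Lp ℂ 2 ν, Continuous fun x => ∫ y, k x y * f y ∂ν := by
    intro f
    apply continuous_of_dominated (bound := fun y => M * ‖f y‖)
    · exact fun x => ((hky x).aestronglyMeasurable).mul (Lp.aestronglyMeasurable f)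
    · intro x
      filter_upwards with y
      rw [norm_mul]
      exact mul_le_mul_of_nonneg_right (hM x y) (norm_nonneg _)
    · exact (aux_integrable f).norm.const_mul M
    · filter_upwards with y
      exact (hkx y).mul continuous_const
  have hbound_g : ∀ (f : Lp ℂ 2 ν) (x : E), ‖∫ y, k x y * f y ∂ν‖ ≤ M * ∫ y, ‖f y‖ ∂ν := by
    intro f x
    calc ‖∫ y, k x y * f y ∂ν‖ ≤ ∫ y, M * ‖f y‖ ∂ν := by
          apply norm_integral_le_of_norm_le ((aux_integrable f).norm.const_mul M)
          filter_upwards with y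
          rw [norm_mul]
          exact mul_le_mul_of_nonneg_right (hM x y) (norm_nonneg _)
      _ = M * ∫ y, ‖f y‖ ∂ν := integral_const_mul M _
  -- the transform as a bounded continuous function
  set Tf : Lp ℂ 2 ν → (E →ᵇ ℂ) := fun f =>
    BoundedContinuousFunction.ofNormedAddCommGroup _ (hcont_g f) (M * ∫ y, ‖f y‖ ∂ν)
      (hbound_g f) with hTfdef
  have hTf_apply : ∀ (f : Lp ℂ 2 ν) (x : E), Tf f x = ∫ y, k x y * f y ∂ν := fun f x => rfl
  have hTf_norm : ∀ f : Lp ℂ 2 ν, ∀ x, ‖Tf f x‖ ≤ M * C₂ * ‖f‖ := by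
    intro f x
    rw [hTf_apply]
    refine (hbound_g f x).trans ?_
    rw [mul_assoc]
    exact mul_le_mul_of_nonneg_left (aux_l1_bound f) hM0
  -- linearity
  have hTf_add : ∀ f g : Lp ℂ 2 ν, Tf (f + g) = Tf f + Tf g := by
    intro f g
    ext x
    simp only [hTf_apply, BoundedContinuousFunction.add_apply]
    rw [← integral_add (hint f x) (hint g x)]
    apply integral_congr_ae
    filter_upwards [Lp.coeFn_add f g] with y hy
    rw [hy]
    simp [mul_add]
  have hTf_smul : ∀ (c : ℂ) (f : Lp ℂ 2 ν), Tf (c • f) = c • Tf f := by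
    intro c f
    ext x
    simp only [hTf_apply, BoundedContinuousFunction.coe_smul, Pi.smul_apply, smul_eq_mul]
    rw [← integral_const_mul]
    apply integral_congr_ae
    filter_upwards [Lp.coeFn_smul c f] with y hy
    rw [hy]
    simp [smul_eq_mul]
    ring
  set T₀ : Lp ℂ 2 ν →ₗ[ℂ] (E →ᵇ ℂ) :=
    { toFun := Tf, map_add' := hTf_add, map_smul' := hTf_smul } with hT₀def
  set T : Lp ℂ 2 ν →L[ℂ] (E →ᵇ ℂ) :=
    T₀.mkContinuous (M * C₂) (fun f =>
      BoundedContinuousFunction.norm_le (mul_nonneg (mul_nonneg hM0 hC₂0) (norm_nonneg f))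
        |>.mpr (hTf_norm f)) with hTdef
  -- the operator
  set L : Lp ℂ 2 ν →L[ℂ] Lp ℂ 2 ν :=
    (BoundedContinuousFunction.toLp (E := ℂ) 2 ν ℂ).comp T with hLdef
  refine ⟨L, ?_, ?_⟩
  · intro f
    have := BoundedContinuousFunction.coeFn_toLp (E := ℂ) 2 ν ℂ (T f)
    refine this.trans ?_
    filter_upwards with x
    exact hTf_apply f x
  · -- compactness via Arzelà–Ascoli
    set A : Set (E →ᵇ ℂ) := T '' Metric.ball 0 1 with hAdef
    have hin : ∀ (g : E →ᵇ ℂ) (x : E), g ∈ A → g x ∈ Metric.closedBall (0 : ℂ) (M * C₂) := by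
      rintro g x ⟨f, hf, rfl⟩
      rw [Metric.mem_closedBall, dist_zero_right]
      refine (hTf_norm f x).trans ?_
      have hf1 : ‖f‖ ≤ 1 := le_of_lt (by simpa using hf)
      calc M * C₂ * ‖f‖ ≤ M * C₂ * 1 :=
            mul_le_mul_of_nonneg_left hf1 (mul_nonneg hM0 hC₂0)
        _ = M * C₂ := mul_one _
    have hequi : Equicontinuous ((↑) : A → E → ℂ) := by
      intro x₀
      rw [Metric.equicontinuousAt_iff]
      intro ε hε
      have hε' : 0 < ε / (2 * (C₂ + 1)) := div_pos hε (by linarith)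
      -- uniform continuity of the kernel
      have huc : UniformContinuous fun p : E × E => k p.1 p.2 :=
        CompactSpace.uniformContinuous_of_continuous hcont
      obtain ⟨δ, hδ, hδ'⟩ := Metric.uniformContinuous_iff.mp huc (ε / (2 * (C₂ + 1))) hε'
      refine ⟨δ, hδ, fun x hx i => ?_⟩
      obtain ⟨f, hf, hfi⟩ := i.2
      rw [← hfi]
      have hf1 : ‖f‖ ≤ 1 := le_of_lt (by simpa using hf)
      have hkdiff : ∀ y : E, ‖k x₀ y - k x y‖ ≤ ε / (2 * (C₂ + 1)) := by
        intro y
        have : dist ((x₀, y) : E × E) (x, y) < δ := by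
          rw [Prod.dist_eq]
          simp only [dist_self]
          refine lt_of_le_of_lt (sup_le le_rfl dist_nonneg) ?_
          rw [dist_comm] at hx
          exact hx
        have h2 := hδ' this
        rw [dist_eq_norm] at h2
        exact le_of_lt h2
      have key : dist (Tf f x₀) (Tf f x) ≤ ε / (2 * (C₂ + 1)) * C₂ := by
        rw [dist_eq_norm, hTf_apply, hTf_apply, ← integral_sub (hint f x₀) (hint f x)]
        have : ∀ y, ‖k x₀ y * f y - k x y * f y‖ ≤ ε / (2 * (C₂ + 1)) * ‖f y‖ := by
          intro y
          rw [← sub_mul, norm_mul]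
          exact mul_le_mul_of_nonneg_right (hkdiff y) (norm_nonneg _)
        calc ‖∫ y, (k x₀ y * f y - k x y * f y) ∂ν‖
            ≤ ∫ y, ε / (2 * (C₂ + 1)) * ‖f y‖ ∂ν := by
              apply norm_integral_le_of_norm_le
                ((aux_integrable f).norm.const_mul _)
              filter_upwards with y using this y
          _ = ε / (2 * (C₂ + 1)) * ∫ y, ‖f y‖ ∂ν := integral_const_mul _ _
          _ ≤ ε / (2 * (C₂ + 1)) * (C₂ * ‖f‖) := by
              apply mul_le_mul_of_nonneg_left _ (le_of_lt (by positivity))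
              exact le_trans (aux_l1_bound f) (le_refl _)
          _ ≤ ε / (2 * (C₂ + 1)) * C₂ := by
              rw [mul_comm C₂ ‖f‖]
              apply mul_le_mul_of_nonneg_left _ (le_of_lt (by positivity))
              calc ‖f‖ * C₂ ≤ 1 * C₂ := mul_le_mul_of_nonneg_right hf1 hC₂0
                _ = C₂ := one_mul _
      calc dist ((T f : E → ℂ) x₀) ((T f : E → ℂ) x) = dist (Tf f x₀) (Tf f x) := rfl
        _ ≤ ε / (2 * (C₂ + 1)) * C₂ := key
        _ < ε := by
            rw [div_mul_eq_mul_div, div_lt_iff₀ (by linarith)]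
            nlinarith
    have hAcomp : IsCompact (closure A) :=
      BoundedContinuousFunction.arzela_ascoli (Metric.closedBall (0 : ℂ) (M * C₂))
        (isCompact_closedBall _ _) A hin hequi
    refine ⟨(BoundedContinuousFunction.toLp (E := ℂ) 2 ν ℂ) '' closure A,
      hAcomp.image (ContinuousLinearMap.continuous _), ?_⟩
    apply Filter.mem_of_superset (Metric.ball_mem_nhds 0 one_pos)
    intro f hf
    exact ⟨T f, subset_closure ⟨f, hf, rfl⟩, rfl⟩
end
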